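/- The map (r,c) ↦ G(r,c) is a bijection from {1,…,n−2} × {1,…,n} onto the set {1,…,p−n} ∪ {p+n+1,…,n²}; equivalently, the inner array uses each number from 1 to n² except the 2n middle numbers p−n+1, …, p+n exactly once. -/
import Mathlib


/-- Base array of the singly-even construction on rows `1 ≤ r ≤ n-2`, columns `1 ≤ c ≤ n`:
for `1 ≤ k ≤ n/2 - 1`, if `k` is odd then `B' r k = (k-1)(n-2) + r` and
`B' r (n+1-k) = 2p - k(n-2) + r`; if `k` is even then `B' r k = k(n-2) + 1 - r` and
`B' r (n+1-k) = 2p - (k-1)(n-2) + 1 - r`; and for `k = m = n/2`,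
`B' r m = (m-1)(n-2) + r` and `B' r (m+1) = 2p - (m-1)(n-2) + 1 - r`, where `p = n²/2`. -/
def B' (n r c : ℕ) : ℕ :=
  if c ≤ n / 2 - 1 then
    if Odd c then (c - 1) * (n - 2) + r else c * (n - 2) + 1 - r
  else if c = n / 2 then (n / 2 - 1) * (n - 2) + r
  else if c = n / 2 + 1 then 2 * (n ^ 2 / 2) - (n / 2 - 1) * (n - 2) + 1 - r
  else
    if Odd (n + 1 - c) then 2 * (n ^ 2 / 2) - (n + 1 - c) * (n - 2) + r
    else 2 * (n ^ 2 / 2) - (n + 1 - c - 1) * (n - 2) + 1 - r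

/-- The set of rows to be swapped:
`S' = {r : r even, r ≤ (n-2)/2} ∪ {r : r odd, (n-2)/2 < r ≤ n-3}`. -/
def S' (n r : ℕ) : Prop :=
  (Even r ∧ r ≤ (n - 2) / 2) ∨ (Odd r ∧ (n - 2) / 2 < r ∧ r ≤ n - 3)

instance (n r : ℕ) : Decidable (S' n r) := by unfold S'; infer_instance

/-- The inner array: `G r c = B' r (n+1-c)` if `r ∈ S'`, and `G r c = B' r c` otherwise. -/
def G (n r c : ℕ) : ℕ := if S' n r then B' n r (n + 1 - c) else B' n r c

/-- The first row of the singly-even construction, with `p = n²/2` and `m = n/2`: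
`R₁ 1 = p+1`, `R₁ n = p+2`, `R₁ (m+2) = p+n-m`, `R₁ (m+3) = p+n-m-1`;
for `2 ≤ j ≤ m+1`, `R₁ j = p-n+j-1` if `j` even and `R₁ j = p+n+2-j` if `j` odd;
for `m+4 ≤ j ≤ n-1`, `R₁ j = p-n+j-1` if `j` odd and `R₁ j = p+n+2-j` if `j` even. -/
def R1 (n j : ℕ) : ℕ :=
  if j = 1 then n ^ 2 / 2 + 1
  else if j = n then n ^ 2 / 2 + 2
  else if j = n / 2 + 2 then n ^ 2 / 2 + n - n / 2
  else if j = n / 2 + 3 then n ^ 2 / 2 + n - n / 2 - 1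
  else if j ≤ n / 2 + 1 then
    if Even j then n ^ 2 / 2 - n + j - 1 else n ^ 2 / 2 + n + 2 - j
  else
    if Odd j then n ^ 2 / 2 - n + j - 1 else n ^ 2 / 2 + n + 2 - j

/-- The last row: `Rₙ j = n² + 1 - R₁ j`. -/
def Rn (n j : ℕ) : ℕ := n ^ 2 + 1 - R1 n j

/-- The complete singly-even array: first row `R₁`, last row `Rₙ`,
and `F' r c = G (r-1) c` for `2 ≤ r ≤ n-1`. -/
def F' (n r c : ℕ) : ℕ :=
  if r = 1 then R1 n c else if r = n then Rn n c else G n (r - 1) c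

def dsc (n c : ℕ) : Bool :=
  if c ≤ n / 2 - 1 then decide (¬ Odd c)
  else if c = n / 2 then false
  else if c = n / 2 + 1 then true
  else decide (¬ Odd (n + 1 - c))

lemma mul_pred (a b : ℕ) (ha : 1 ≤ a) : a * b = (a - 1) * b + b := by
  conv_lhs => rw [show a = (a - 1) + 1 by omega]
  rw [Nat.succ_mul]

def bse (n c : ℕ) : ℕ := if c ≤ n / 2 then (c - 1) * (n - 2) else n ^ 2 - (n + 1 - c) * (n - 2)

lemma B'_eq (n r c : ℕ) (h2 : n % 4 = 2) (hn : 6 ≤ n)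
    (hr1 : 1 ≤ r) (hr2 : r ≤ n - 2) (hc1 : 1 ≤ c) (hc2 : c ≤ n) :
    B' n r c = bse n c + (if dsc n c then n - 1 - r else r) := by
  have hnsq : n ^ 2 = n * n := sq n
  have h2p : 2 * (n ^ 2 / 2) = n ^ 2 := by
    have he : n % 2 = 0 := by omega
    have : n * n % 2 = 0 := by simp [Nat.mul_mod, he]
    omega
  by_cases h1 : c ≤ n / 2 - 1
  · have hb : bse n c = (c - 1) * (n - 2) := if_pos (by omega)
    by_cases ho : Odd c
    · have hB : B' n r c = (c - 1) * (n - 2) + r := by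
        unfold B'; rw [if_pos h1, if_pos ho]
      have hd : dsc n c = false := by unfold dsc; rw [if_pos h1]; simp [ho]
      rw [hB, hb, hd]; simp
    · have hB : B' n r c = c * (n - 2) + 1 - r := by
        unfold B'; rw [if_pos h1, if_neg ho]
      have hd : dsc n c = true := by unfold dsc; rw [if_pos h1]; simp [ho]
      have hmul : c * (n - 2) = (c - 1) * (n - 2) + (n - 2) := mul_pred _ _ (by omega)
      rw [hB, hb, hd]; simp only [if_true]
      omega
  · by_cases hcm : c = n / 2
    · have hb : bse n c = (c - 1) * (n - 2) := if_pos (by omega)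
      have hB : B' n r c = (n / 2 - 1) * (n - 2) + r := by
        unfold B'; rw [if_neg h1, if_pos hcm]
      have hd : dsc n c = false := by unfold dsc; rw [if_neg h1, if_pos hcm]
      rw [hB, hb, hd, hcm]; simp
    · have hnc : ¬ c ≤ n / 2 := by omega
      have hb : bse n c = n ^ 2 - (n + 1 - c) * (n - 2) := if_neg hnc
      have hkb : (n + 1 - c) * (n - 2) ≤ n * n :=
        Nat.mul_le_mul (by omega) (by omega)
      by_cases hc1' : c = n / 2 + 1
      · have hk : n + 1 - c = n / 2 := by omega
        have hmul : (n / 2) * (n - 2) = (n / 2 - 1) * (n - 2) + (n - 2) := mul_pred _ _ (by omega)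
        have hkb' : (n / 2) * (n - 2) ≤ n * n := Nat.mul_le_mul (by omega) (by omega)
        have hB : B' n r c = 2 * (n ^ 2 / 2) - (n / 2 - 1) * (n - 2) + 1 - r := by
          unfold B'; rw [if_neg h1, if_neg hcm, if_pos hc1']
        have hd : dsc n c = true := by unfold dsc; rw [if_neg h1, if_neg hcm, if_pos hc1']
        rw [hB, hb, hd, hk]; simp only [if_true]
        omega
      · by_cases ho : Odd (n + 1 - c)
        · have hB : B' n r c = 2 * (n ^ 2 / 2) - (n + 1 - c) * (n - 2) + r := by
            unfold B'; rw [if_neg h1, if_neg hcm, if_neg hc1', if_pos ho]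
          have hd : dsc n c = false := by
            unfold dsc; rw [if_neg h1, if_neg hcm, if_neg hc1']; simp [ho]
          rw [hB, hb, hd]; simp only [if_false, Bool.false_eq_true]
          omega
        · have hmul : (n + 1 - c) * (n - 2) = (n + 1 - c - 1) * (n - 2) + (n - 2) :=
            mul_pred _ _ (by omega)
          have hB : B' n r c = 2 * (n ^ 2 / 2) - (n + 1 - c - 1) * (n - 2) + 1 - r := by
            unfold B'; rw [if_neg h1, if_neg hcm, if_neg hc1', if_neg ho]
          have hd : dsc n c = true := by
            unfold dsc; rw [if_neg h1, if_neg hcm, if_neg hc1']; simp [ho]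
          rw [hB, hb, hd]; simp only [if_true]
          omega


def binv (n v : ℕ) : ℕ × ℕ :=
  if v ≤ n ^ 2 / 2 - n then ((v - 1) / (n - 2) + 1, (v - 1) % (n - 2) + 1)
  else (n - (n ^ 2 - v) / (n - 2), (n - 2) - (n ^ 2 - v) % (n - 2))

lemma divmod (q b t : ℕ) (hq : 0 < q) (ht : t < q) :
    (t + b * q) / q = b ∧ (t + b * q) % q = t := by
  constructor
  · rw [Nat.add_mul_div_right _ _ hq, Nat.div_eq_of_lt ht]; omega
  · rw [Nat.add_mul_mod_self_right, Nat.mod_eq_of_lt ht]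

lemma key (n : ℕ) (h2 : n % 4 = 2) (hn : 6 ≤ n) :
    (n / 2) * (n - 2) = n ^ 2 / 2 - n ∧ 2 * (n ^ 2 / 2) = n ^ 2 := by
  obtain ⟨m, hm⟩ : ∃ m, n = 2 * m := ⟨n / 2, by omega⟩
  subst hm
  have e1 : (2 * m) ^ 2 = 2 * (m * (2 * m)) := by ring
  have e2 : 2 * m / 2 = m := by omega
  have e3 : m * (2 * m - 2) + m * 2 = m * (2 * m) := by
    rw [← Nat.mul_add]; congr 1; omega
  rw [e2]
  omega

lemma binv_left (n v : ℕ) (hq : 0 < n - 2) (hmq : (n / 2) * (n - 2) = n ^ 2 / 2 - n)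
    (hv1 : 1 ≤ v) (hle : v ≤ n ^ 2 / 2 - n) :
    ∃ D M, binv n v = (D + 1, M + 1) ∧ (n - 2) * D + M = v - 1 ∧ M < n - 2 ∧ D < n / 2 := by
  refine ⟨_, _, if_pos hle, Nat.div_add_mod _ _, Nat.mod_lt _ hq, ?_⟩
  rw [Nat.div_lt_iff_lt_mul hq]; omega

lemma binv_right (n v : ℕ) (hq : 0 < n - 2) (hmq : (n / 2) * (n - 2) = n ^ 2 / 2 - n)
    (h2p : 2 * (n ^ 2 / 2) = n ^ 2) (hv1 : n ^ 2 / 2 + n + 1 ≤ v) (hv2 : v ≤ n ^ 2) :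
    ∃ D M, binv n v = (n - D, (n - 2) - M) ∧ (n - 2) * D + M = n ^ 2 - v ∧ M < n - 2 ∧
      D < n / 2 := by
  refine ⟨_, _, if_neg (by omega), Nat.div_add_mod _ _, Nat.mod_lt _ hq, ?_⟩
  rw [Nat.div_lt_iff_lt_mul hq]; omega

lemma bse_bij (n : ℕ) (h2 : n % 4 = 2) (hn : 6 ≤ n) :
    Set.BijOn (fun cs : ℕ × ℕ => bse n cs.1 + cs.2)
      (Set.Icc 1 n ×ˢ Set.Icc 1 (n - 2))
      (Set.Icc 1 (n ^ 2 / 2 - n) ∪ Set.Icc (n ^ 2 / 2 + n + 1) (n ^ 2)) := by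
  obtain ⟨hmq, h2p⟩ := key n h2 hn
  have hq : 0 < n - 2 := by omega
  have hmapsto : Set.MapsTo (fun cs : ℕ × ℕ => bse n cs.1 + cs.2)
      (Set.Icc 1 n ×ˢ Set.Icc 1 (n - 2))
      (Set.Icc 1 (n ^ 2 / 2 - n) ∪ Set.Icc (n ^ 2 / 2 + n + 1) (n ^ 2)) := by
    rintro ⟨c, s⟩ hcs
    simp only [Set.mem_prod, Set.mem_Icc] at hcs
    obtain ⟨⟨hc1, hc2⟩, hs1, hs2⟩ := hcs
    simp only [Set.mem_union, Set.mem_Icc]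
    by_cases hcm : c ≤ n / 2
    · left
      have hb : bse n c = (c - 1) * (n - 2) := if_pos hcm
      have h3 : c * (n - 2) ≤ (n / 2) * (n - 2) := Nat.mul_le_mul_right _ hcm
      have h4 := mul_pred c (n - 2) hc1
      omega
    · right
      have hb : bse n c = n ^ 2 - (n + 1 - c) * (n - 2) := if_neg hcm
      have h3 : (n + 1 - c) * (n - 2) ≤ (n / 2) * (n - 2) :=
        Nat.mul_le_mul_right _ (by omega)
      have h4 := mul_pred (n + 1 - c) (n - 2) (by omega)
      omega
  have hmapsto' : Set.MapsTo (binv n)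
      (Set.Icc 1 (n ^ 2 / 2 - n) ∪ Set.Icc (n ^ 2 / 2 + n + 1) (n ^ 2))
      (Set.Icc 1 n ×ˢ Set.Icc 1 (n - 2)) := by
    rintro v hv
    simp only [Set.mem_union, Set.mem_Icc] at hv
    rcases hv with ⟨hv1, hv2⟩ | ⟨hv1, hv2⟩
    · obtain ⟨D, M, hbr, hDM, hM, hD⟩ := binv_left n v hq hmq hv1 hv2
      rw [Set.mem_prod, hbr]
      simp only [Set.mem_Icc]
      refine ⟨⟨by omega, by omega⟩, by omega, by omega⟩
    · obtain ⟨D, M, hbr, hDM, hM, hD⟩ := binv_right n v hq hmq h2p hv1 hv2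
      rw [Set.mem_prod, hbr]
      simp only [Set.mem_Icc]
      refine ⟨⟨by omega, by omega⟩, by omega, by omega⟩
  apply Set.InvOn.bijOn _ hmapsto hmapsto'
  constructor
  · -- LeftInvOn
    rintro ⟨c, s⟩ hcs
    simp only [Set.mem_prod, Set.mem_Icc] at hcs
    obtain ⟨⟨hc1, hc2⟩, hs1, hs2⟩ := hcs
    show binv n (bse n c + s) = (c, s)
    by_cases hcm : c ≤ n / 2
    · have hb : bse n c = (c - 1) * (n - 2) := if_pos hcm
      have h3 : c * (n - 2) ≤ (n / 2) * (n - 2) := Nat.mul_le_mul_right _ hcm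
      have h4 := mul_pred c (n - 2) hc1
      obtain ⟨hdv, hmd⟩ := divmod (n - 2) (c - 1) (s - 1) hq (by omega)
      rw [hb]
      have hbr : binv n ((c - 1) * (n - 2) + s)
          = (((c - 1) * (n - 2) + s - 1) / (n - 2) + 1,
             ((c - 1) * (n - 2) + s - 1) % (n - 2) + 1) := if_pos (by omega)
      rw [hbr, show (c - 1) * (n - 2) + s - 1 = (s - 1) + (c - 1) * (n - 2) by omega,
        hdv, hmd]
      simp only [Prod.mk.injEq]
      omega
    · have hb : bse n c = n ^ 2 - (n + 1 - c) * (n - 2) := if_neg hcm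
      have h3 : (n + 1 - c) * (n - 2) ≤ (n / 2) * (n - 2) :=
        Nat.mul_le_mul_right _ (by omega)
      have h4 := mul_pred (n + 1 - c) (n - 2) (by omega)
      obtain ⟨hdv, hmd⟩ := divmod (n - 2) (n + 1 - c - 1) (n - 2 - s) hq (by omega)
      rw [hb]
      have hbr : binv n (n ^ 2 - (n + 1 - c) * (n - 2) + s)
          = (n - (n ^ 2 - (n ^ 2 - (n + 1 - c) * (n - 2) + s)) / (n - 2),
             (n - 2) - (n ^ 2 - (n ^ 2 - (n + 1 - c) * (n - 2) + s)) % (n - 2)) :=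
        if_neg (by omega)
      rw [hbr, show n ^ 2 - (n ^ 2 - (n + 1 - c) * (n - 2) + s)
          = (n - 2 - s) + (n + 1 - c - 1) * (n - 2) by omega, hdv, hmd]
      simp only [Prod.mk.injEq]
      omega
  · -- RightInvOn
    rintro v hv
    simp only [Set.mem_union, Set.mem_Icc] at hv
    show bse n (binv n v).1 + (binv n v).2 = v
    rcases hv with ⟨hv1, hv2⟩ | ⟨hv1, hv2⟩
    · obtain ⟨D, M, hbr, hDM, hM, hD⟩ := binv_left n v hq hmq hv1 hv2
      rw [hbr]
      have hb : bse n (D + 1) = (D + 1 - 1) * (n - 2) := if_pos (by omega)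
      simp only [hb, Nat.add_sub_cancel]
      have hcomm : (n - 2) * D = D * (n - 2) := Nat.mul_comm _ _
      omega
    · obtain ⟨D, M, hbr, hDM, hM, hD⟩ := binv_right n v hq hmq h2p hv1 hv2
      rw [hbr]
      have hb : bse n (n - D) = n ^ 2 - (n + 1 - (n - D)) * (n - 2) :=
        if_neg (by omega)
      have hk : n + 1 - (n - D) = D + 1 := by omega
      rw [hb, hk, Nat.succ_mul]
      have hle : (D + 1) * (n - 2) ≤ (n / 2) * (n - 2) :=
        Nat.mul_le_mul_right _ (by omega)
      rw [Nat.succ_mul] at hle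
      have hcomm : (n - 2) * D = D * (n - 2) := Nat.mul_comm _ _
      omega

lemma sf_bij (n : ℕ) (hn : 6 ≤ n) :
    Set.BijOn (fun rc : ℕ × ℕ => (rc.2, if dsc n rc.2 then n - 1 - rc.1 else rc.1))
      (Set.Icc 1 (n - 2) ×ˢ Set.Icc 1 n) (Set.Icc 1 n ×ˢ Set.Icc 1 (n - 2)) := by
  apply Set.InvOn.bijOn
    (f' := fun cs : ℕ × ℕ => (if dsc n cs.1 then n - 1 - cs.2 else cs.2, cs.1))
  · constructor
    · rintro ⟨r, c⟩ hrc
      simp only [Set.mem_prod, Set.mem_Icc] at hrc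
      by_cases hdc : dsc n c <;>
        simp only [hdc, if_true, if_false, Bool.false_eq_true, Prod.mk.injEq,
          true_and, and_true] <;> omega
    · rintro ⟨c, s⟩ hcs
      simp only [Set.mem_prod, Set.mem_Icc] at hcs
      by_cases hdc : dsc n c <;>
        simp only [hdc, if_true, if_false, Bool.false_eq_true, Prod.mk.injEq,
          true_and, and_true] <;> omega
  · rintro ⟨r, c⟩ hrc
    simp only [Set.mem_prod, Set.mem_Icc] at hrc ⊢
    by_cases hdc : dsc n c <;> simp only [hdc, if_true, if_false, Bool.false_eq_true] <;>
      refine ⟨⟨by omega, by omega⟩, by omega, by omega⟩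
  · rintro ⟨c, s⟩ hcs
    simp only [Set.mem_prod, Set.mem_Icc] at hcs ⊢
    by_cases hdc : dsc n c <;> simp only [hdc, if_true, if_false, Bool.false_eq_true] <;>
      refine ⟨⟨by omega, by omega⟩, by omega, by omega⟩

lemma flip_bij (n : ℕ) (hn : 6 ≤ n) :
    Set.BijOn (fun rc : ℕ × ℕ => (rc.1, if S' n rc.1 then n + 1 - rc.2 else rc.2))
      (Set.Icc 1 (n - 2) ×ˢ Set.Icc 1 n) (Set.Icc 1 (n - 2) ×ˢ Set.Icc 1 n) := by
  have hinv : Set.LeftInvOn (fun rc : ℕ × ℕ => (rc.1, if S' n rc.1 then n + 1 - rc.2 else rc.2))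
      (fun rc : ℕ × ℕ => (rc.1, if S' n rc.1 then n + 1 - rc.2 else rc.2))
      (Set.Icc 1 (n - 2) ×ˢ Set.Icc 1 n) := by
    rintro ⟨r, c⟩ hrc
    simp only [Set.mem_prod, Set.mem_Icc] at hrc
    by_cases hS : S' n r <;>
      simp only [hS, if_true, if_false, Prod.mk.injEq, true_and, and_true] <;> omega
  have hmt : Set.MapsTo (fun rc : ℕ × ℕ => (rc.1, if S' n rc.1 then n + 1 - rc.2 else rc.2))
      (Set.Icc 1 (n - 2) ×ˢ Set.Icc 1 n) (Set.Icc 1 (n - 2) ×ˢ Set.Icc 1 n) := by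
    rintro ⟨r, c⟩ hrc
    simp only [Set.mem_prod, Set.mem_Icc] at hrc ⊢
    by_cases hS : S' n r <;> simp only [hS, if_true, if_false] <;>
      refine ⟨⟨by omega, by omega⟩, by omega, by omega⟩
  exact Set.InvOn.bijOn ⟨hinv, hinv⟩ hmt hmt


/-- The map `(r,c) ↦ G r c` is a bijection from `{1,…,n-2} × {1,…,n}` onto
`{1,…,p-n} ∪ {p+n+1,…,n²}` (with `p = n²/2`): the inner array uses each number from `1`
to `n²` except the `2n` middle numbers `p-n+1, …, p+n` exactly once. -/
theorem singly_even_inner_bijective (n : ℕ) (h2 : n % 4 = 2) (hn : 6 ≤ n) :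
    Set.BijOn (fun rc : ℕ × ℕ => G n rc.1 rc.2)
      (Set.Icc 1 (n - 2) ×ˢ Set.Icc 1 n)
      (Set.Icc 1 (n ^ 2 / 2 - n) ∪ Set.Icc (n ^ 2 / 2 + n + 1) (n ^ 2)) := by
  have hbij := ((bse_bij n h2 hn).comp (sf_bij n hn)).comp (flip_bij n hn)
  apply hbij.congr
  rintro ⟨r, c⟩ hrc
  simp only [Set.mem_prod, Set.mem_Icc] at hrc
  obtain ⟨⟨hr1, hr2⟩, hc1, hc2⟩ := hrc
  simp only [Function.comp]
  by_cases hS : S' n r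
  · simp only [G, hS, if_true]
    exact (B'_eq n r (n + 1 - c) h2 hn hr1 hr2 (by omega) (by omega)).symm
  · simp only [G, hS, if_false]
    exact (B'_eq n r c h2 hn hr1 hr2 hc1 hc2).symm
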